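/- Let (Ω, 𝓕, ν) be a probability space and let Θ = [-1,1]^M be equipped with its Borel σ-algebra 𝓔 and the uniform probability measure λ(dθ) = 2^{-M} dθ. Let (f_n)_{n∈ℕ} be functions f_n : Θ × Ω → ℝ such that there exists f ∈ L²(Θ, 𝓔, λ) with Var_λ(f) > 0 and for ν-almost all ω: f_n(θ, ω) → f(θ) for all θ ∈ Θ, each f_n(·, ω) is 𝓔-measurable, and there exists φ_ω ∈ L²(Θ, 𝓔, λ) with |f_n(θ, ω)| ≤ φ_ω(θ) for all θ and all n. Then for every nonempty subset U ⊆ {1, …, M}, the group Sobol' indices satisfy S_U(f_n(·, ω)) → S_U(f) as n → ∞, for ν-almost all ω ∈ Ω. -/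

import Mathlib

open MeasureTheory ProbabilityTheory Filter

/-- The uniform probability measure `λ(dθ) = 2^{-M} dθ` on `Θ = [-1,1]^M`. -/
noncomputable def uniformCube (M : ℕ) : Measure (Fin M → ℝ) :=
  Measure.pi fun _ => (2 : ENNReal)⁻¹ • volume.restrict (Set.Icc (-1 : ℝ) 1)

/-- The sub-σ-algebra of the (Borel) product σ-algebra of `Θ = [-1,1]^M`
generated by the coordinate projections `θ ↦ θ j` for `j ∈ U`. -/
def coordSigmaAlgebra (M : ℕ) (U : Finset (Fin M)) : MeasurableSpace (Fin M → ℝ) :=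
  ⨆ j ∈ U, MeasurableSpace.comap (fun θ : Fin M → ℝ => θ j) inferInstance

section Aux

instance uniformCube.instIsProbabilityMeasure (M : ℕ) :
    IsProbabilityMeasure (uniformCube M) := by
  have h : IsProbabilityMeasure ((2 : ENNReal)⁻¹ • volume.restrict (Set.Icc (-1 : ℝ) 1)) := by
    constructor
    rw [Measure.smul_apply, Measure.restrict_apply MeasurableSet.univ, Set.univ_inter,
      Real.volume_Icc]
    norm_num
    exact ENNReal.inv_mul_cancel (by norm_num) (by norm_num)
  unfold uniformCube
  infer_instance

lemma coordSigmaAlgebra_le (M : ℕ) (U : Finset (Fin M)) :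
    coordSigmaAlgebra M U ≤ MeasurableSpace.pi := by
  refine iSup_le fun j => iSup_le fun _ => ?_
  exact (measurable_pi_apply j).comap_le

variable {α : Type*} {m m0 : MeasurableSpace α} {μ : Measure α}

lemma sq_eLpNorm_two (g : α → ℝ) (μ : Measure α) :
    eLpNorm g 2 μ ^ 2 = ∫⁻ x, (‖g x‖₊ : ENNReal) ^ 2 ∂μ := by
  rw [eLpNorm_eq_lintegral_rpow_enorm_toReal two_ne_zero ENNReal.ofNat_ne_top]
  rw [← ENNReal.rpow_natCast _ 2, ← ENNReal.rpow_mul]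
  simp only [ENNReal.toReal_ofNat, one_div, Nat.cast_ofNat]
  rw [inv_mul_cancel₀ (two_ne_zero : (2:ℝ) ≠ 0), ENNReal.rpow_one]
  simp_rw [ENNReal.rpow_two, enorm_eq_nnnorm]

lemma variance_eq_sq (g : α → ℝ) (μ : Measure α) :
    variance g μ = ((eLpNorm (fun x => g x - ∫ y, g y ∂μ) 2 μ).toReal) ^ 2 := by
  rw [variance, evariance, ← ENNReal.toReal_pow]
  congr 1
  rw [eLpNorm_eq_lintegral_rpow_enorm_toReal two_ne_zero ENNReal.ofNat_ne_top]
  rw [← ENNReal.rpow_natCast _ 2, ← ENNReal.rpow_mul]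
  simp only [ENNReal.toReal_ofNat, one_div, Nat.cast_ofNat]
  rw [inv_mul_cancel₀ (two_ne_zero : (2:ℝ) ≠ 0), ENNReal.rpow_one]
  simp_rw [ENNReal.rpow_two]

lemma toReal_eLpNorm_sub_le {f g : α → ℝ} (hf : MemLp f 2 μ) (hg : MemLp g 2 μ) :
    |(eLpNorm f 2 μ).toReal - (eLpNorm g 2 μ).toReal| ≤ (eLpNorm (f - g) 2 μ).toReal := by
  have h3 : ‖hf.toLp f - hg.toLp g‖ = (eLpNorm (f - g) 2 μ).toReal := by
    rw [← MemLp.toLp_sub]; exact Lp.norm_toLp _ _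
  rw [← Lp.norm_toLp f hf, ← Lp.norm_toLp g hg, ← h3]
  exact abs_norm_sub_norm_le _ _

lemma condexp_ae_eq_condExpL2' (hm : m ≤ m0) [IsFiniteMeasure μ] {g : α → ℝ} (hg : MemLp g 2 μ) :
    μ[g|m] =ᵐ[μ] (condExpL2 ℝ ℝ hm (hg.toLp g) : α → ℝ) := by
  refine (ae_eq_condExp_of_forall_setIntegral_eq hm (hg.integrable one_le_two) ?_ ?_ ?_).symm
  · intro s _ _
    exact ((Lp.memLp _).integrable one_le_two).integrableOn
  · intro s hs hμs
    rw [integral_condExpL2_eq hm (hg.toLp g) hs hμs.ne]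
    exact setIntegral_congr_ae (hm s hs) ((hg.coeFn_toLp).mono fun x hx _ => hx)
  · exact lpMeas.aestronglyMeasurable _

lemma memLp_two_condexp (hm : m ≤ m0) [IsFiniteMeasure μ] {g : α → ℝ} (hg : MemLp g 2 μ) :
    MemLp (μ[g|m]) 2 μ :=
  (Lp.memLp _).ae_eq (condexp_ae_eq_condExpL2' hm hg).symm

lemma eLpNorm_two_condexp_le (hm : m ≤ m0) [IsFiniteMeasure μ] {g : α → ℝ} (hg : MemLp g 2 μ) :
    eLpNorm (μ[g|m]) 2 μ ≤ eLpNorm g 2 μ := by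
  rw [eLpNorm_congr_ae (condexp_ae_eq_condExpL2' hm hg)]
  refine le_trans (eLpNorm_condExpL2_le hm _) ?_
  rw [eLpNorm_congr_ae hg.coeFn_toLp]

lemma tendsto_eLpNorm_two_of_dominated {g : ℕ → α → ℝ} {gl φ : α → ℝ}
    (hmeas : ∀ n, Measurable (g n)) (hgl : MemLp gl 2 μ) (hφ : MemLp φ 2 μ)
    (hbd : ∀ x, ∀ n, |g n x| ≤ φ x)
    (hconv : ∀ x, Tendsto (fun n => g n x) atTop (nhds (gl x))) :
    Tendsto (fun n => eLpNorm (g n - gl) 2 μ) atTop (nhds 0) := by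
  set ψ : α → ℝ := fun w => ‖φ w‖ + ‖gl w‖ with hψdef
  have hψ : MemLp ψ 2 μ := hφ.norm.add hgl.norm
  have hL : Tendsto (fun n => ∫⁻ x, (‖g n x - gl x‖₊ : ENNReal) ^ 2 ∂μ) atTop (nhds 0) := by
    have h0 : (0 : ENNReal) = ∫⁻ _, (0:ENNReal) ∂μ := by simp
    rw [h0]
    refine tendsto_lintegral_of_dominated_convergence'
      (fun x => (‖ψ x‖₊ : ENNReal) ^ 2) (fun n => ?_) (fun n => ae_of_all _ fun x => ?_) ?_ ?_
    · exact (((hmeas n).aemeasurable.sub hgl.1.aemeasurable).enorm).pow_const 2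
    · refine pow_le_pow_left' ?_ 2
      refine ENNReal.coe_le_coe.2 ?_
      have h1 : ‖g n x - gl x‖ ≤ ‖ψ x‖ := by
        have hgl' : |gl x| ≤ φ x := by
          have := le_of_tendsto (hconv x).abs (Eventually.of_forall fun n => hbd x n)
          simpa using this
        simp only [hψdef, Real.norm_eq_abs]
        have hψ0 : (0:ℝ) ≤ |φ x| + |gl x| := by positivity
        rw [abs_of_nonneg hψ0]
        calc |g n x - gl x| ≤ |g n x| + |gl x| := abs_sub _ _
          _ ≤ φ x + |gl x| := by linarith [hbd x n]
          _ ≤ |φ x| + |gl x| := by linarith [le_abs_self (φ x)]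
      exact_mod_cast h1
    · rw [← sq_eLpNorm_two]
      exact (ENNReal.pow_lt_top hψ.2).ne
    · refine ae_of_all _ fun x => ?_
      have h0' : Tendsto (fun n => g n x - gl x) atTop (nhds 0) := by
        simpa using (hconv x).sub (tendsto_const_nhds (x := gl x))
      have h1 : Tendsto (fun n => (‖g n x - gl x‖₊)^2) atTop (nhds 0) := by
        have := (h0'.nnnorm).pow 2
        simpa using this
      have := (ENNReal.tendsto_coe.2 h1)
      simpa [ENNReal.coe_pow] using this
  have heq : ∀ n, eLpNorm (g n - gl) 2 μ
      = (∫⁻ x, (‖g n x - gl x‖₊ : ENNReal) ^ 2 ∂μ) ^ (1/2 : ℝ) := by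
    intro n
    rw [eLpNorm_eq_lintegral_rpow_enorm_toReal two_ne_zero ENNReal.ofNat_ne_top]
    simp only [ENNReal.toReal_ofNat, Pi.sub_apply]
    simp_rw [ENNReal.rpow_two, enorm_eq_nnnorm]
  simp_rw [heq]
  have hc : Tendsto (fun x : ENNReal => x ^ (1/2:ℝ)) (nhds 0) (nhds ((0:ENNReal) ^ (1/2:ℝ))) :=
    ENNReal.continuous_rpow_const.tendsto 0
  have := hc.comp hL
  simpa [ENNReal.zero_rpow_of_pos, Function.comp_def] using this

lemma tendsto_variance_of_tendsto_eLpNorm [IsProbabilityMeasure μ]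
    {g : ℕ → α → ℝ} {gl : α → ℝ}
    (hg : ∀ n, MemLp (g n) 2 μ) (hgl : MemLp gl 2 μ)
    (h : Tendsto (fun n => eLpNorm (g n - gl) 2 μ) atTop (nhds 0)) :
    Tendsto (fun n => variance (g n) μ) atTop (nhds (variance gl μ)) := by
  have ha : Tendsto (fun n => (eLpNorm (g n - gl) 2 μ).toReal) atTop (nhds 0) := by
    have := (ENNReal.tendsto_toReal (by simp : (0:ENNReal) ≠ ⊤)).comp h
    simpa [Function.comp_def] using this
  have hint : ∀ n, |∫ x, g n x ∂μ - ∫ x, gl x ∂μ| ≤ (eLpNorm (g n - gl) 2 μ).toReal := by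
    intro n
    rw [← integral_sub ((hg n).integrable one_le_two) (hgl.integrable one_le_two)]
    have h1 : |∫ x, (g n x - gl x) ∂μ| ≤ ∫ x, ‖g n x - gl x‖ ∂μ := by
      simpa [Real.norm_eq_abs] using norm_integral_le_integral_norm (fun x => g n x - gl x)
    refine h1.trans ?_
    have h2 : ∫ x, ‖g n x - gl x‖ ∂μ = (eLpNorm (g n - gl) 1 μ).toReal := by
      rw [eLpNorm_one_eq_lintegral_enorm,
        ← integral_norm_eq_lintegral_enorm ((hg n).sub hgl).1]
      rfl
    rw [h2]
    exact ENNReal.toReal_mono ((hg n).sub hgl).2.ne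
      (eLpNorm_le_eLpNorm_of_exponent_le one_le_two ((hg n).sub hgl).1)
  have hM : Tendsto (fun n => ∫ x, g n x ∂μ) atTop (nhds (∫ x, gl x ∂μ)) := by
    rw [tendsto_iff_dist_tendsto_zero]
    refine squeeze_zero (fun n => dist_nonneg) (fun n => ?_) ha
    rw [Real.dist_eq]; exact hint n
  set b : ℕ → ℝ := fun n => (eLpNorm (fun x => g n x - ∫ y, g n y ∂μ) 2 μ).toReal with hb
  set bl : ℝ := (eLpNorm (fun x => gl x - ∫ y, gl y ∂μ) 2 μ).toReal with hbl
  have hgc : ∀ n, MemLp (fun x => g n x - ∫ y, g n y ∂μ) 2 μ :=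
    fun n => (hg n).sub (memLp_const _)
  have hglc : MemLp (fun x => gl x - ∫ y, gl y ∂μ) 2 μ := hgl.sub (memLp_const _)
  have hbd : ∀ n, |b n - bl| ≤ (eLpNorm (g n - gl) 2 μ).toReal
      + |∫ x, g n x ∂μ - ∫ x, gl x ∂μ| := by
    intro n
    refine (toReal_eLpNorm_sub_le (hgc n) hglc).trans ?_
    have heq : ((fun x => g n x - ∫ y, g n y ∂μ) - fun x => gl x - ∫ y, gl y ∂μ)
        = (g n - gl) + (fun _ => (∫ y, gl y ∂μ) - ∫ y, g n y ∂μ) := by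
      funext x; simp [Pi.sub_apply]; ring
    rw [heq]
    refine le_trans (ENNReal.toReal_mono ?_
      (eLpNorm_add_le ((hg n).sub hgl).1 aestronglyMeasurable_const one_le_two)) ?_
    · exact (ENNReal.add_lt_top.2 ⟨((hg n).sub hgl).2, (memLp_const _).2⟩).ne
    · rw [ENNReal.toReal_add ((hg n).sub hgl).2.ne (memLp_const _).2.ne]
      have hconst : (eLpNorm (fun _ : α => (∫ y, gl y ∂μ) - ∫ y, g n y ∂μ) 2 μ).toReal
          = |(∫ y, gl y ∂μ) - ∫ y, g n y ∂μ| := by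
        rw [eLpNorm_const _ two_ne_zero (NeZero.ne μ)]
        simp [Real.norm_eq_abs]
      rw [hconst, abs_sub_comm (∫ y, gl y ∂μ)]
  have hbtend : Tendsto b atTop (nhds bl) := by
    rw [tendsto_iff_dist_tendsto_zero]
    have hz : Tendsto (fun n => (eLpNorm (g n - gl) 2 μ).toReal
        + |∫ x, g n x ∂μ - ∫ x, gl x ∂μ|) atTop (nhds 0) := by
      have h2 : Tendsto (fun n => |∫ x, g n x ∂μ - ∫ x, gl x ∂μ|) atTop (nhds 0) := by
        have := (hM.sub (tendsto_const_nhds (x := ∫ x, gl x ∂μ))).abs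
        simpa using this
      simpa using ha.add h2
    exact squeeze_zero (fun n => dist_nonneg) (fun n => by rw [Real.dist_eq]; exact hbd n) hz
  have hfin : Tendsto (fun n => b n ^ 2) atTop (nhds (bl ^ 2)) := hbtend.pow 2
  simp_rw [hb, hbl] at hfin
  simpa [variance_eq_sq] using hfin

end Aux

/-- Almost sure convergence of stochastic group Sobol' indices: if for ν-a.a.
`ω` the functions `f_n(·, ω)` are measurable, converge pointwise on `Θ` to
`f ∈ L²(Θ, λ)` with `Var_λ(f) > 0`, and are dominated by some `φ_ω ∈ L²(Θ, λ)`,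
then for every nonempty `U ⊆ {1,…,M}`,
`S_U(f_n(·,ω)) = Var(E[f_n(·,ω)|θ_U])/Var(f_n(·,ω)) → S_U(f)` ν-almost surely. -/
theorem stochastic_group_sobol_index_tendsto_ae
    {Ω : Type*} [MeasurableSpace Ω] (ν : Measure Ω) [IsProbabilityMeasure ν]
    {M : ℕ} (f : ℕ → (Fin M → ℝ) → Ω → ℝ) (flim : (Fin M → ℝ) → ℝ)
    (hflim : MemLp flim 2 (uniformCube M))
    (hvar : 0 < variance flim (uniformCube M))
    (hconv : ∀ᵐ ω ∂ν, ∀ θ, Tendsto (fun n => f n θ ω) atTop (nhds (flim θ)))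
    (hmeas_bdd : ∀ᵐ ω ∂ν, (∀ n, Measurable fun θ => f n θ ω) ∧
      ∃ φ : (Fin M → ℝ) → ℝ, MemLp φ 2 (uniformCube M) ∧ ∀ θ, ∀ n, |f n θ ω| ≤ φ θ) :
    ∀ U : Finset (Fin M), U.Nonempty →
      ∀ᵐ ω ∂ν,
        Tendsto
          (fun n =>
            variance ((uniformCube M)[(fun θ => f n θ ω)|coordSigmaAlgebra M U])
                (uniformCube M) /
              variance (fun θ => f n θ ω) (uniformCube M))
          atTop
          (nhds
            (variance ((uniformCube M)[flim|coordSigmaAlgebra M U]) (uniformCube M) /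
              variance flim (uniformCube M))) := by
  intro U _
  filter_upwards [hconv, hmeas_bdd] with ω h1 h2
  obtain ⟨hmeasn, φ, hφ, hbd⟩ := h2
  set μ := uniformCube M with hμdef
  have hm : coordSigmaAlgebra M U ≤ MeasurableSpace.pi := coordSigmaAlgebra_le M U
  set g : ℕ → (Fin M → ℝ) → ℝ := fun n θ => f n θ ω with hgdef
  have hg : ∀ n, MemLp (g n) 2 μ := fun n =>
    MemLp.of_le hφ (hmeasn n).aestronglyMeasurable (ae_of_all _ fun θ => by
      simpa [Real.norm_eq_abs] using (hbd θ n).trans (le_abs_self _))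
  have hsnorm : Tendsto (fun n => eLpNorm (g n - flim) 2 μ) atTop (nhds 0) :=
    tendsto_eLpNorm_two_of_dominated hmeasn hflim hφ hbd h1
  have hden := tendsto_variance_of_tendsto_eLpNorm hg hflim hsnorm
  have hgc : ∀ n, MemLp (μ[g n|coordSigmaAlgebra M U]) 2 μ :=
    fun n => memLp_two_condexp hm (hg n)
  have hcsnorm : Tendsto
      (fun n => eLpNorm (μ[g n|coordSigmaAlgebra M U] - μ[flim|coordSigmaAlgebra M U]) 2 μ)
      atTop (nhds 0) := by
    have hb : ∀ n, eLpNorm (μ[g n|coordSigmaAlgebra M U] - μ[flim|coordSigmaAlgebra M U]) 2 μ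
        ≤ eLpNorm (g n - flim) 2 μ := by
      intro n
      have hsub : μ[g n|coordSigmaAlgebra M U] - μ[flim|coordSigmaAlgebra M U]
          =ᵐ[μ] μ[g n - flim|coordSigmaAlgebra M U] :=
        (condExp_sub ((hg n).integrable one_le_two) (hflim.integrable one_le_two) _).symm
      rw [eLpNorm_congr_ae hsub]
      exact eLpNorm_two_condexp_le hm ((hg n).sub hflim)
    exact tendsto_of_tendsto_of_tendsto_of_le_of_le tendsto_const_nhds hsnorm
      (fun n => zero_le) hb
  have hnum := tendsto_variance_of_tendsto_eLpNorm hgc (memLp_two_condexp hm hflim) hcsnorm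
  exact hnum.div hden hvar.ne'
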